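/- Let T be a real m×n matrix, K a real p×n matrix, let (A_i, B_i) for i = 1,…,n_p be pairs of real n×n and n×p matrices, let w_l ∈ ℝⁿ for l = 1,…,n_w, let ẑ ∈ ℝⁿ and α ∈ ℝ. Suppose for each i there exists a nonnegative real m×m matrix P_i with P_i T = T (A_i + B_i K), and that for all i and l one has P_i (T ẑ + α𝟏) + T w_l ≤ T ẑ + α𝟏. Then the set Z_f := {z ∈ ℝⁿ : T (z − ẑ) ≤ α𝟏} is robust positively invariant: for every z ∈ Z_f, every (A, B) in the convex hull of {(A_1,B_1),…,(A_{n_p},B_{n_p})}, and every w in the convex hull of {w_1,…,w_{n_w}}, one has (A + B K) z + w ∈ Z_f. -/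

import Mathlib

lemma mulVec_mono_of_nonneg {m : ℕ} (Q : Matrix (Fin m) (Fin m) ℝ)
    (hQ : ∀ r s, 0 ≤ Q r s) {u v : Fin m → ℝ} (h : u ≤ v) :
    Q.mulVec u ≤ Q.mulVec v := by
  intro r
  simp only [Matrix.mulVec, dotProduct]
  exact Finset.sum_le_sum fun s _ => mul_le_mul_of_nonneg_left (h s) (hQ r s)

/-- Robust positive invariance of the homothetic terminal set defined via Farkas
certificates: if nonnegative matrices `P i` satisfy `P i * T = T (A i + B i K)`
and `P i (T ẑ + α𝟏) + T w l ≤ T ẑ + α𝟏` for all vertices `i`, `l`, then the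
homothetic tube `Z_f = {z : T (z - ẑ) ≤ α𝟏}` is robust positively invariant for
the closed loop `z⁺ = (A + B K) z + w` with `(A, B)` in the convex hull of the
vertex matrix pairs and `w` in the convex hull of the disturbance vertices. -/
theorem homothetic_terminal_set_RPI {n m p np nw : ℕ}
    (T : Matrix (Fin m) (Fin n) ℝ) (K : Matrix (Fin p) (Fin n) ℝ)
    (A : Fin np → Matrix (Fin n) (Fin n) ℝ) (B : Fin np → Matrix (Fin n) (Fin p) ℝ)
    (w : Fin nw → Fin n → ℝ) (zhat : Fin n → ℝ) (α : ℝ)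
    (P : Fin np → Matrix (Fin m) (Fin m) ℝ)
    (hPnonneg : ∀ i, ∀ r s, 0 ≤ P i r s)
    (hPeq : ∀ i, P i * T = T * (A i + B i * K))
    (hPineq : ∀ i l, (P i).mulVec (T.mulVec zhat + α • 1) + T.mulVec (w l)
        ≤ T.mulVec zhat + α • 1) :
    ∀ z ∈ {z : Fin n → ℝ | T.mulVec (z - zhat) ≤ α • 1},
      ∀ AB ∈ convexHull ℝ (Set.range fun i => (A i, B i)),
        ∀ ww ∈ convexHull ℝ (Set.range w),
          (AB.1 + AB.2 * K).mulVec z + ww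
            ∈ {z : Fin n → ℝ | T.mulVec (z - zhat) ≤ α • 1} := by
  intro z hz AB hAB ww hww
  simp only [Set.mem_setOf_eq] at hz ⊢
  -- vertex case
  have key : ∀ i l, T.mulVec ((A i + B i * K).mulVec z + w l - zhat) ≤ α • 1 := by
    intro i l
    have h1 : T.mulVec ((A i + B i * K).mulVec z) = (P i).mulVec (T.mulVec z) := by
      rw [Matrix.mulVec_mulVec, Matrix.mulVec_mulVec, hPeq]
    have h2 : T.mulVec z ≤ T.mulVec zhat + α • 1 := by
      intro j
      have := hz j
      simp only [Matrix.mulVec_sub, Pi.sub_apply, Pi.add_apply] at this ⊢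
      linarith
    have h3 := mulVec_mono_of_nonneg (P i) (hPnonneg i) h2
    have h4 := hPineq i l
    intro j
    have h3j := h3 j
    have h4j := h4 j
    simp only [Matrix.mulVec_sub, Matrix.mulVec_add, Pi.sub_apply, Pi.add_apply] at *
    rw [h1] at *
    linarith
  -- convexity in (A, B)
  have s1 : AB ∈ {M : Matrix (Fin n) (Fin n) ℝ × Matrix (Fin n) (Fin p) ℝ |
      ∀ l, T.mulVec ((M.1 + M.2 * K).mulVec z + w l - zhat) ≤ α • 1} := by
    refine convexHull_min ?_ ?_ hAB
    · rintro _ ⟨i, rfl⟩ l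
      exact key i l
    · rintro x hx y hy a b ha hb hab l j
      have hxj := hx l j
      have hyj := hy l j
      simp only [Prod.fst_add, Prod.snd_add, Prod.smul_fst, Prod.smul_snd,
        Matrix.add_mul, Matrix.smul_mul, Matrix.add_mulVec, Matrix.smul_mulVec,
        Matrix.mulVec_add, Matrix.mulVec_sub, Matrix.mulVec_smul,
        Pi.add_apply, Pi.sub_apply, Pi.smul_apply, smul_eq_mul] at *
      have hb' : b = 1 - a := by linarith
      subst hb'
      have h1 := mul_le_mul_of_nonneg_left hxj ha
      have h2 := mul_le_mul_of_nonneg_left hyj hb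
      nlinarith [h1, h2]
  -- convexity in w
  have s2 : ww ∈ {v : Fin n → ℝ |
      T.mulVec ((AB.1 + AB.2 * K).mulVec z + v - zhat) ≤ α • 1} := by
    refine convexHull_min ?_ ?_ hww
    · rintro _ ⟨l, rfl⟩
      exact s1 l
    · rintro x hx y hy a b ha hb hab j
      have hxj := hx j
      have hyj := hy j
      simp only [Matrix.mulVec_add, Matrix.mulVec_sub, Matrix.mulVec_smul,
        Pi.add_apply, Pi.sub_apply, Pi.smul_apply, smul_eq_mul] at *
      have hb' : b = 1 - a := by linarith
      subst hb'
      have h1 := mul_le_mul_of_nonneg_left hxj ha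
      have h2 := mul_le_mul_of_nonneg_left hyj hb
      nlinarith [h1, h2]
  have := s2
  intro j
  have h := this j
  simp only [Matrix.mulVec_add, Matrix.mulVec_sub, Pi.add_apply, Pi.sub_apply] at h ⊢
  linarith
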